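/- Let s ≥ k₁ with s ≥ m₁ where m₁ = (2^{k₁} − 1)/k₁, let r ≥ s, and define (r_ℓ)_{ℓ≥0} by r₀ = r and r_{ℓ+1} = r_ℓ^{f(r_ℓ)}. Then for every ℓ ≥ 0: r_ℓ ≥ r^{((3/4)·f(r))^{2^ℓ − 1}} ≥ s^{((3/4)·f(s))^{2^ℓ − 1}}, and consequently f(r_ℓ) ≥ ((3/4)·f(s))^{2^ℓ}. -/
import Mathlib


open Finset Filter Topology

/-- `f(x) = log₂(x+1)`. -/
noncomputable def flog (x : ℝ) : ℝ := Real.logb 2 (x + 1)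

/-- The sequence `r₀ = r`, `r_{ℓ+1} = r_ℓ^{f(r_ℓ)}`. -/
noncomputable def rseq (r : ℝ) : ℕ → ℝ
  | 0 => r
  | (ℓ + 1) => rseq r ℓ ^ flog (rseq r ℓ)

lemma sq_add_one_lt_two_pow (n : ℕ) (hn : 5 ≤ n) : n * n + 1 < 2 ^ n := by
  induction n with
  | zero => omega
  | succ m ih =>
    rcases Nat.lt_or_ge m 5 with h | h
    · have hm : m = 4 := by omega
      subst hm; norm_num
    · have := ih (by omega)
      have h2 : 2 * m + 1 ≤ m * m := by nlinarith
      have : (m + 1) * (m + 1) + 1 ≤ 2 * (m * m + 1) := by nlinarith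
      calc (m + 1) * (m + 1) + 1 ≤ 2 * (m * m + 1) := this
        _ < 2 * 2 ^ m := by omega
        _ = 2 ^ (m + 1) := by ring

/-- Inequalities (2.24) and (2.25): for `s ≥ k₁` with `s ≥ m₁ = (2^{k₁}-1)/k₁` and
`r ≥ s`, one has `r_ℓ ≥ r^{((3/4)f(r))^{2^ℓ-1}} ≥ s^{((3/4)f(s))^{2^ℓ-1}}` and
`f(r_ℓ) ≥ ((3/4)f(s))^{2^ℓ}`. -/
theorem statement8 (k1 : ℕ) (hk1pos : 1 ≤ k1)
    (h1 : (1 : ℝ) ≤ (2 / 3 : ℝ) * flog ((3 / 4 : ℝ) * flog k1))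
    (h2 : (3 : ℝ) ≤ Real.log k1)
    (h3 : ∀ r a : ℝ, (k1 : ℝ) < r → 1 < a → (3 / 4 : ℝ) * a * flog r ≤ flog (r ^ a))
    (s r : ℝ) (hs1 : (k1 : ℝ) ≤ s) (hs2 : ((2 : ℝ) ^ k1 - 1) / k1 ≤ s) (hsr : s ≤ r)
    (ℓ : ℕ) :
    r ^ ((((3 : ℝ) / 4) * flog r) ^ (2 ^ ℓ - 1 : ℕ)) ≤ rseq r ℓ ∧
    s ^ ((((3 : ℝ) / 4) * flog s) ^ (2 ^ ℓ - 1 : ℕ)) ≤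
      r ^ ((((3 : ℝ) / 4) * flog r) ^ (2 ^ ℓ - 1 : ℕ)) ∧
    (((3 : ℝ) / 4) * flog s) ^ (2 ^ ℓ : ℕ) ≤ flog (rseq r ℓ) := by
  have hk1R : (0 : ℝ) < k1 := by exact_mod_cast hk1pos
  -- k1 > 20
  have hek : (20 : ℝ) < k1 := by
    have he : Real.exp 3 ≤ (k1 : ℝ) := by
      have := Real.exp_le_exp.mpr h2
      rwa [Real.exp_log hk1R] at this
    have h9 : (2.7182818283 : ℝ) < Real.exp 1 := Real.exp_one_gt_d9
    have h3e : Real.exp 1 ^ (3 : ℕ) = Real.exp (3 : ℕ) := Real.exp_one_pow 3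
    have : (20 : ℝ) < Real.exp 3 := by
      have hlt : ((2.7182818283 : ℝ)) ^ (3 : ℕ) < Real.exp 1 ^ (3 : ℕ) :=
        pow_lt_pow_left₀ h9 (by norm_num) (by norm_num)
      have h20 : (20 : ℝ) < (2.7182818283 : ℝ) ^ (3 : ℕ) := by norm_num
      have := lt_trans h20 hlt
      rw [h3e] at this; norm_num at this ⊢; exact this
    linarith
  have hk21 : 21 ≤ k1 := by
    have h20 : 20 < k1 := by exact_mod_cast hek
    omega
  -- s > k1
  have hks : (k1 : ℝ) < s := by
    have hn : k1 * k1 + 1 < 2 ^ k1 := sq_add_one_lt_two_pow k1 (by omega)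
    have hR : (k1 : ℝ) * k1 + 1 < (2 : ℝ) ^ k1 := by exact_mod_cast hn
    have : (k1 : ℝ) < ((2 : ℝ) ^ k1 - 1) / k1 := by
      rw [lt_div_iff₀ hk1R]; linarith
    linarith
  have hkr : (k1 : ℝ) < r := lt_of_lt_of_le hks hsr
  have hs21 : (21 : ℝ) ≤ s := by
    have : (21 : ℝ) ≤ (k1 : ℝ) := by exact_mod_cast hk21
    linarith
  have hs0 : (0 : ℝ) < s := by linarith
  have hr1 : (1 : ℝ) ≤ r := by linarith
  have hr0 : (0 : ℝ) ≤ r := by linarith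
  -- flog s ≥ 4
  have hfls : (4 : ℝ) ≤ flog s := by
    unfold flog
    rw [Real.le_logb_iff_rpow_le (by norm_num) (by linarith)]
    have : (2 : ℝ) ^ (4 : ℝ) = 16 := by
      rw [show (4 : ℝ) = ((4 : ℕ) : ℝ) by norm_num, Real.rpow_natCast]; norm_num
    rw [this]; linarith
  have hflsr : flog s ≤ flog r := by
    unfold flog
    exact Real.logb_le_logb_of_le (by norm_num) (by linarith) (by linarith)
  set cs := (3 : ℝ) / 4 * flog s with hcs_def
  set cr := (3 : ℝ) / 4 * flog r with hcr_def
  have hcs3 : (3 : ℝ) ≤ cs := by rw [hcs_def]; linarith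
  have hcs1 : (1 : ℝ) < cs := by linarith
  have hcsr : cs ≤ cr := by rw [hcs_def, hcr_def]; linarith
  have hcr1 : (1 : ℝ) < cr := lt_of_lt_of_le hcs1 hcsr
  have hcr0 : (0 : ℝ) ≤ cr := by linarith
  have hflr0 : (0 : ℝ) ≤ flog r := by rw [hcr_def] at hcr1; linarith
  -- main induction
  have key : ∀ m : ℕ, r ^ (cr ^ (2 ^ m - 1 : ℕ)) ≤ rseq r m ∧
      cr ^ (2 ^ m : ℕ) ≤ flog (rseq r m) := by
    intro m
    induction m with
    | zero =>
      constructor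
      · simp [rseq, Real.rpow_one]
      · simpa [rseq, hcr_def] using (by linarith : (3:ℝ)/4 * flog r ≤ flog r)
    | succ m ih =>
      obtain ⟨ih1, ih2⟩ := ih
      have hpow1 : (1 : ℕ) ≤ 2 ^ m := Nat.one_le_two_pow
      have hpow1' : (1 : ℕ) ≤ 2 ^ (m + 1) := Nat.one_le_two_pow
      have hexp : (2 : ℕ) ^ (m + 1) - 1 = (2 ^ m - 1) + 2 ^ m := by
        have : 2 ^ (m + 1) = 2 * 2 ^ m := by ring
        omega
      have hb1 : (1 : ℝ) ≤ r ^ (cr ^ (2 ^ m - 1 : ℕ)) :=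
        Real.one_le_rpow hr1 (by positivity)
      have hrl1 : (1 : ℝ) ≤ rseq r m := le_trans hb1 ih1
      have hflrl0 : (0 : ℝ) ≤ flog (rseq r m) := le_trans (by positivity) ih2
      have h1a : r ^ (cr ^ (2 ^ (m + 1) - 1 : ℕ)) ≤ rseq r (m + 1) := by
        calc r ^ (cr ^ (2 ^ (m + 1) - 1 : ℕ))
            = (r ^ (cr ^ (2 ^ m - 1 : ℕ))) ^ (cr ^ (2 ^ m : ℕ)) := by
              rw [← Real.rpow_mul hr0, ← pow_add, ← hexp]
          _ ≤ (rseq r m) ^ (cr ^ (2 ^ m : ℕ)) :=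
              Real.rpow_le_rpow (by positivity) ih1 (by positivity)
          _ ≤ (rseq r m) ^ (flog (rseq r m)) :=
              Real.rpow_le_rpow_of_exponent_le hrl1 ih2
          _ = rseq r (m + 1) := rfl
      refine ⟨h1a, ?_⟩
      have hane : (1 : ℝ) < cr ^ (2 ^ (m + 1) - 1 : ℕ) :=
        one_lt_pow₀ hcr1 (by omega)
      have hflog := h3 r (cr ^ (2 ^ (m + 1) - 1 : ℕ)) hkr hane
      have hrpos : (0 : ℝ) < r ^ (cr ^ (2 ^ (m + 1) - 1 : ℕ)) := by positivity
      have hmono : flog (r ^ (cr ^ (2 ^ (m + 1) - 1 : ℕ))) ≤ flog (rseq r (m + 1)) := by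
        unfold flog
        exact Real.logb_le_logb_of_le (by norm_num) (by linarith) (by linarith)
      calc cr ^ (2 ^ (m + 1) : ℕ)
          = 3 / 4 * (cr ^ (2 ^ (m + 1) - 1 : ℕ)) * flog r := by
            have hcrm : cr ^ (2 ^ (m + 1) : ℕ) = cr ^ (2 ^ (m + 1) - 1 : ℕ) * cr := by
              rw [← pow_succ]
              congr 1
              omega
            rw [hcrm, hcr_def]; ring
        _ ≤ flog (r ^ (cr ^ (2 ^ (m + 1) - 1 : ℕ))) := hflog
        _ ≤ flog (rseq r (m + 1)) := hmono
  obtain ⟨K1, K2⟩ := key ℓ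
  refine ⟨K1, ?_, ?_⟩
  · calc s ^ (cs ^ (2 ^ ℓ - 1 : ℕ)) ≤ r ^ (cs ^ (2 ^ ℓ - 1 : ℕ)) :=
        Real.rpow_le_rpow (le_of_lt hs0) hsr (by positivity)
      _ ≤ r ^ (cr ^ (2 ^ ℓ - 1 : ℕ)) :=
        Real.rpow_le_rpow_of_exponent_le hr1 (pow_le_pow_left₀ (by linarith) hcsr _)
  · exact le_trans (pow_le_pow_left₀ (by linarith) hcsr _) K2
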